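/- For all integers l ≥ 1 and 0 ≤ k ≤ l+1, the identity (1/(l+2))·C(l,k)·C(l+k+2,k+1) + (1/(l+2))·C(l,k-1)·C(l+k+1,k) = (1/(l+1))·C(l+1,k)·C(l+k+1,k+1) holds, where C(n,k) denotes the binomial coefficient (with C(l,-1)=0 and C(l,l+1)=0 as appropriate). -/

import Mathlib

theorem coeff_identity_A (l k : ℕ) (hl : 1 ≤ l) (hk : k ≤ l + 1) :
    (1 / ((l : ℚ) + 2)) * (l.choose k) * ((l + k + 2).choose (k + 1))
      + (1 / ((l : ℚ) + 2)) *
        (if k = 0 then 0 else (l.choose (k - 1)) * ((l + k + 1).choose k))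
      = (1 / ((l : ℚ) + 1)) * ((l + 1).choose k) * ((l + k + 1).choose (k + 1)) := by
  have hlq1 : (l : ℚ) + 1 ≠ 0 := by positivity
  have hlq2 : (l : ℚ) + 2 ≠ 0 := by positivity
  rcases Nat.eq_zero_or_pos k with hk0 | hk1
  · subst hk0
    simp [Nat.choose_one_right]
    field_simp
  · rcases eq_or_lt_of_le hk with hkl | hkl
    · -- k = l + 1
      subst hkl
      rw [Nat.choose_eq_zero_of_lt (by omega : l < l + 1)]
      simp only [if_neg (by omega : ¬ l + 1 = 0), Nat.add_sub_cancel]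
      push_cast
      have e1 : l + (l+1) + 1 = 2*l + 2 := by ring
      have e2 : (l+1) + 1 = l + 2 := by ring
      rw [e1, e2, Nat.choose_self, Nat.cast_choose ℚ (by omega : l + 1 ≤ 2*l+2),
        Nat.cast_choose ℚ (by omega : l + 2 ≤ 2*l+2),
        show 2*l+2 - (l+1) = l+1 from by omega,
        show 2*l+2 - (l+2) = l from by omega,
        Nat.factorial_succ (l+1), Nat.factorial_succ l]
      have h1 : (Nat.factorial l : ℚ) ≠ 0 := Nat.cast_ne_zero.mpr (Nat.factorial_ne_zero _)
      have h2 : (Nat.factorial (2*l+2) : ℚ) ≠ 0 := Nat.cast_ne_zero.mpr (Nat.factorial_ne_zero _)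
      push_cast
      field_simp
      rw [Nat.choose_self]; push_cast; ring
    · -- 1 ≤ k ≤ l
      obtain ⟨m, rfl⟩ : ∃ m, k = m + 1 := ⟨k - 1, by omega⟩
      obtain ⟨j, rfl⟩ : ∃ j, l = m + 1 + j := ⟨l - (m+1), by omega⟩
      simp only [if_neg (by omega : ¬ m + 1 = 0), Nat.add_sub_cancel]
      push_cast
      rw [show m+1+j + (m+1) + 2 = 2*m+j+4 from by ring,
          show m+1+j + (m+1) + 1 = 2*m+j+3 from by ring,
          show m+1+j+1 = m+j+2 from by ring,
          Nat.cast_choose ℚ (by omega : m+1 ≤ m+1+j),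
          Nat.cast_choose ℚ (by omega : m+2 ≤ 2*m+j+4),
          Nat.cast_choose ℚ (by omega : m ≤ m+1+j),
          Nat.cast_choose ℚ (by omega : m+1 ≤ 2*m+j+3),
          Nat.cast_choose ℚ (by omega : m+1 ≤ m+j+2),
          Nat.cast_choose ℚ (by omega : m+2 ≤ 2*m+j+3),
          show m+1+j - (m+1) = j from by omega,
          show 2*m+j+4 - (m+2) = m+j+2 from by omega,
          show m+1+j - m = j+1 from by omega,
          show 2*m+j+3 - (m+1) = m+j+2 from by omega,
          show m+j+2 - (m+1) = j+1 from by omega,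
          show 2*m+j+3 - (m+2) = m+j+1 from by omega,
          show m+1+j = m+j+1 from by ring,
          Nat.factorial_succ (m+1), Nat.factorial_succ m, Nat.factorial_succ j,
          Nat.factorial_succ (m+j+1),
          show (2*m+j+4) = (2*m+j+3) + 1 from by ring, Nat.factorial_succ (2*m+j+3)]
      have h1 : (Nat.factorial m : ℚ) ≠ 0 := Nat.cast_ne_zero.mpr (Nat.factorial_ne_zero _)
      have h2 : (Nat.factorial j : ℚ) ≠ 0 := Nat.cast_ne_zero.mpr (Nat.factorial_ne_zero _)
      have h3 : (Nat.factorial (m+j+1) : ℚ) ≠ 0 := Nat.cast_ne_zero.mpr (Nat.factorial_ne_zero _)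
      have h4 : (Nat.factorial (2*m+j+3) : ℚ) ≠ 0 := Nat.cast_ne_zero.mpr (Nat.factorial_ne_zero _)
      push_cast
      have hm1 : (m : ℚ) + 1 ≠ 0 := by positivity
      have hm2 : (m : ℚ) + 2 ≠ 0 := by positivity
      have hj1 : (j : ℚ) + 1 ≠ 0 := by positivity
      have hmj : (m : ℚ) + j + 2 ≠ 0 := by positivity
      field_simp
      ring
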